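/- For every integer j ≥ 1, every integer n with 1−j ≤ n ≤ j−1, and every integer x with 0 ≤ x ≤ j−1, the symmetric Krawtchouk polynomials satisfy the difference equation 2(j+n)(j−n)·K_{j+n−1}(2x; 1/2, 2(j−1)) = j(2j−1)·K_{j+n}(2x; 1/2, 2j) − j(2j−1)·K_{j+n}(2(x+1); 1/2, 2j). -/

import Mathlib

/-- The Pochhammer symbol `(a)_k = a (a+1) ⋯ (a+k-1)`. -/
noncomputable def poch (a : ℝ) (k : ℕ) : ℝ := ∏ i ∈ Finset.range k, (a + i)

/-- The Krawtchouk polynomial `K_n(x; p, N)` defined by the terminating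
hypergeometric sum `∑_{k=0}^n (−n)_k (−x)_k / ((−N)_k k!) · (1/p)^k`. -/
noncomputable def kraw (n : ℕ) (x : ℝ) (p : ℝ) (N : ℕ) : ℝ :=
  ∑ k ∈ Finset.range (n + 1),
    poch (-(n : ℝ)) k * poch (-x) k / (poch (-(N : ℝ)) k * (Nat.factorial k : ℝ)) * (1 / p) ^ k

lemma poch_zero (a : ℝ) : poch a 0 = 1 := by simp [poch]

lemma poch_succ (a : ℝ) (k : ℕ) : poch a (k+1) = poch a k * (a + k) := by
  simp [poch, Finset.prod_range_succ]

lemma poch_succ' (a : ℝ) (k : ℕ) : poch a (k+1) = a * poch (a+1) k := by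
  unfold poch
  rw [Finset.prod_range_succ']
  rw [Finset.prod_congr rfl (fun i (_ : i ∈ Finset.range k) =>
    (by push_cast; ring : (a + ((i+1 : ℕ):ℝ)) = (a+1) + i))]
  push_cast
  ring

lemma poch_mul (a : ℝ) (k : ℕ) : poch a k * (a + k) = a * poch (a+1) k := by
  rw [← poch_succ, poch_succ']

lemma poch_neg_ne_zero {N k : ℕ} (h : k ≤ N) : poch (-(N:ℝ)) k ≠ 0 := by
  unfold poch
  rw [Finset.prod_ne_zero_iff]
  intro i hi
  have hi' : i < N := lt_of_lt_of_le (Finset.mem_range.mp hi) h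
  have : (i:ℝ) < N := by exact_mod_cast hi'
  intro hc; linarith

lemma poch_neg_eq_zero {m k : ℕ} (h : m < k) : poch (-(m:ℝ)) k = 0 := by
  unfold poch
  exact Finset.prod_eq_zero (Finset.mem_range.mpr h) (by simp)

lemma poch_diff (a : ℝ) (k : ℕ) :
    poch a (k+1) - poch (a-1) (k+1) = (k+1) * poch a k := by
  rw [poch_succ, poch_succ']
  have h : (a-1)+1 = a := by ring
  rw [h]; ring

lemma kraw_diff (n N : ℕ) (hn : 1 ≤ n) (hN : n ≤ N) (x : ℝ) :
    kraw n x (1/2) N - kraw n (x+1) (1/2) N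
      = (2*(n:ℝ)/(N:ℝ)) * kraw (n-1) x (1/2) (N-1) := by
  unfold kraw
  rw [← Finset.sum_sub_distrib, Finset.mul_sum]
  have hr : n - 1 + 1 = n := by omega
  rw [hr, Finset.sum_range_succ']
  have h0 : poch (-(n:ℝ)) 0 * poch (-x) 0 / (poch (-(N:ℝ)) 0 * (Nat.factorial 0:ℝ)) * (1/(1/2):ℝ)^0
      - poch (-(n:ℝ)) 0 * poch (-(x+1)) 0 / (poch (-(N:ℝ)) 0 * (Nat.factorial 0:ℝ)) * (1/(1/2):ℝ)^0 = 0 := by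
    simp [poch_zero]
  rw [h0, add_zero]
  apply Finset.sum_congr rfl
  intro k hk
  have hk' : k < n := Finset.mem_range.mp hk
  have hdiff : poch (-x) (k+1) - poch (-(x+1)) (k+1) = ((k:ℝ)+1) * poch (-x) k := by
    have := poch_diff (-x) k
    have e : -x - 1 = -(x+1) := by ring
    rw [e] at this
    linarith
  have hn1 : poch (-(n:ℝ)) (k+1) = -(n:ℝ) * poch (-((n-1:ℕ):ℝ)) k := by
    rw [poch_succ']
    congr 2
    push_cast [Nat.cast_sub hn]
    ring
  have hN1 : poch (-(N:ℝ)) (k+1) = -(N:ℝ) * poch (-((N-1:ℕ):ℝ)) k := by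
    rw [poch_succ']
    congr 2
    have h1 : 1 ≤ N := le_trans hn hN
    push_cast [Nat.cast_sub h1]
    ring
  have hfac : ((Nat.factorial (k+1)):ℝ) = ((k:ℝ)+1) * (Nat.factorial k : ℝ) := by
    rw [Nat.factorial_succ]; push_cast; ring
  have hQ : poch (-((N-1:ℕ):ℝ)) k ≠ 0 := poch_neg_ne_zero (by omega)
  have hNne : (N:ℝ) ≠ 0 := by
    have : 1 ≤ N := le_trans hn hN
    positivity
  have hfne : (Nat.factorial k : ℝ) ≠ 0 := by positivity
  have hkne : ((k:ℝ)+1) ≠ 0 := by positivity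
  have hs : poch (-x) (k+1) = poch (-(x+1)) (k+1) + ((k:ℝ)+1) * poch (-x) k := by
    linarith
  rw [hn1, hN1, hfac, hs]
  have hp : ((1:ℝ)/(1/2)) = 2 := by norm_num
  rw [hp]
  field_simp
  ring

lemma kraw_zero (x : ℝ) (p : ℝ) (N : ℕ) : kraw 0 x p N = 1 := by
  simp [kraw, poch_zero]

lemma kraw_contig (n M : ℕ) (hM : n + 1 ≤ M) (x : ℝ) :
    (M:ℝ) * kraw n x (1/2) M
      = (n:ℝ) * kraw (n-1) x (1/2) (M-1) + ((M:ℝ) - (n:ℝ)) * kraw n x (1/2) (M-1) := by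
  rcases Nat.eq_zero_or_pos n with h0 | hn
  · subst h0
    simp [kraw_zero]
  -- n ≥ 1
  have hr : n - 1 + 1 = n := by omega
  unfold kraw
  rw [hr]
  -- extend the middle sum from range n to range (n+1): the extra term vanishes
  have hext : (n:ℝ) * ∑ k ∈ Finset.range n,
      poch (-((n-1:ℕ):ℝ)) k * poch (-x) k / (poch (-((M-1:ℕ):ℝ)) k * (Nat.factorial k:ℝ)) * (1/(1/2):ℝ)^k
      = (n:ℝ) * ∑ k ∈ Finset.range (n+1),
      poch (-((n-1:ℕ):ℝ)) k * poch (-x) k / (poch (-((M-1:ℕ):ℝ)) k * (Nat.factorial k:ℝ)) * (1/(1/2):ℝ)^k := by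
    rw [Finset.sum_range_succ]
    have hz : poch (-((n-1:ℕ):ℝ)) n = 0 := poch_neg_eq_zero (by omega)
    rw [hz]
    ring
  rw [hext, Finset.mul_sum, Finset.mul_sum, Finset.mul_sum, ← Finset.sum_add_distrib]
  apply Finset.sum_congr rfl
  intro k hk
  have hk' : k < n + 1 := Finset.mem_range.mp hk
  have hkn : k ≤ n := by omega
  set A := poch (-(n:ℝ)) k with hA
  set A' := poch (-((n-1:ℕ):ℝ)) k with hA'
  set P := poch (-(M:ℝ)) k with hP
  set P' := poch (-((M-1:ℕ):ℝ)) k with hP'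
  have hMP : P * (-(M:ℝ) + k) = -(M:ℝ) * P' := by
    rw [hP, hP', poch_mul]
    congr 2
    push_cast [Nat.cast_sub (by omega : 1 ≤ M)]
    ring
  have hNA : A * (-(n:ℝ) + k) = -(n:ℝ) * A' := by
    rw [hA, hA', poch_mul]
    congr 2
    push_cast [Nat.cast_sub hn]
    ring
  have hPne : P ≠ 0 := poch_neg_ne_zero (by omega)
  have hP'ne : P' ≠ 0 := poch_neg_ne_zero (by omega)
  have hfne : (Nat.factorial k : ℝ) ≠ 0 := by positivity
  have key : (M:ℝ) * A * P' = ((n:ℝ) * A' + ((M:ℝ) - (n:ℝ)) * A) * P := by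
    linear_combination A * hMP - P * hNA
  have hp : ((1:ℝ)/(1/2)) = 2 := by norm_num
  rw [hp]
  field_simp
  linear_combination poch (-x) k * key

lemma kraw_sum (n M : ℕ) (hM : n + 1 ≤ M) (x : ℝ) :
    kraw n x (1/2) M + kraw n (x+1) (1/2) M
      = (2*((M:ℝ) - (n:ℝ))/(M:ℝ)) * kraw n x (1/2) (M-1) := by
  have hMne : (M:ℝ) ≠ 0 := by
    have : 1 ≤ M := by omega
    positivity
  rcases Nat.eq_zero_or_pos n with h0 | hn
  · subst h0
    simp only [kraw_zero]
    field_simp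
    norm_num
  have hd := kraw_diff n M hn (by omega) x
  have hc := kraw_contig n M hM x
  have hd' : (M:ℝ) * (kraw n x (1/2) M - kraw n (x+1) (1/2) M)
      = 2*(n:ℝ) * kraw (n-1) x (1/2) (M-1) := by
    rw [hd]; field_simp
  have goal' : (M:ℝ) * (kraw n x (1/2) M + kraw n (x+1) (1/2) M)
      = 2*((M:ℝ) - (n:ℝ)) * kraw n x (1/2) (M-1) := by
    linear_combination (-1:ℝ) * hd' + 2 * hc
  field_simp
  linear_combination goal'

theorem stmt1 (j n x : ℤ) (hj : 1 ≤ j) (hn1 : 1 - j ≤ n) (hn2 : n ≤ j - 1)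
    (hx1 : 0 ≤ x) (hx2 : x ≤ j - 1) :
    2 * ((j : ℝ) + (n : ℝ)) * ((j : ℝ) - (n : ℝ)) *
        kraw (j + n - 1).toNat (2 * (x : ℝ)) (1/2) (2 * (j - 1)).toNat
      = (j : ℝ) * (2 * (j : ℝ) - 1) * kraw (j + n).toNat (2 * (x : ℝ)) (1/2) (2 * j).toNat
        - (j : ℝ) * (2 * (j : ℝ) - 1) *
            kraw (j + n).toNat (2 * ((x : ℝ) + 1)) (1/2) (2 * j).toNat := by
  set m := (j + n).toNat with hmdef
  set J := j.toNat with hJdef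
  have hm1 : 1 ≤ m := by omega
  have hm2 : m ≤ 2*J - 1 := by omega
  have hJ1 : 1 ≤ J := by omega
  have hE1 : (j + n - 1).toNat = m - 1 := by omega
  have hE2 : (2 * (j - 1)).toNat = 2*J - 2 := by omega
  have hE3 : (2 * j).toNat = 2*J := by omega
  rw [hE1, hE2, hE3]
  have harg : 2*((x:ℝ)+1) = (2*(x:ℝ)+1)+1 := by ring
  rw [harg]
  have hmr : ((m:ℕ):ℝ) = (j:ℝ) + (n:ℝ) := by
    have : (m:ℤ) = j + n := by omega
    exact_mod_cast this
  have hJr : ((J:ℕ):ℝ) = (j:ℝ) := by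
    have : (J:ℤ) = j := by omega
    exact_mod_cast this
  have hjne : (j:ℝ) ≠ 0 := by
    have : (1:ℝ) ≤ (j:ℝ) := by exact_mod_cast hj
    linarith
  have h2jne : 2*(j:ℝ) - 1 ≠ 0 := by
    have : (1:ℝ) ≤ (j:ℝ) := by exact_mod_cast hj
    linarith
  have hc1 : ((2*J:ℕ):ℝ) = 2*(j:ℝ) := by push_cast [hJr]; ring
  have hc2 : ((2*J-1:ℕ):ℝ) = 2*(j:ℝ) - 1 := by
    rw [Nat.cast_sub (by omega)]; push_cast [hJr]; ring
  have hc3 : ((m-1:ℕ):ℝ) = (j:ℝ) + (n:ℝ) - 1 := by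
    rw [Nat.cast_sub hm1]; push_cast [hmr]; ring
  have e1 := kraw_diff m (2*J) hm1 (by omega) (2*(x:ℝ))
  have e2 := kraw_diff m (2*J) hm1 (by omega) (2*(x:ℝ)+1)
  have e3 := kraw_sum (m-1) (2*J-1) (by omega) (2*(x:ℝ))
  have hE4 : (2*J-1)-1 = 2*J-2 := by omega
  rw [hE4] at e3
  rw [hmr, hc1] at e1 e2
  rw [hc3, hc2] at e3
  have e1' : 2*(j:ℝ) * (kraw m (2*(x:ℝ)) (1/2) (2*J) - kraw m (2*(x:ℝ)+1) (1/2) (2*J))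
      = 2*((j:ℝ)+(n:ℝ)) * kraw (m-1) (2*(x:ℝ)) (1/2) (2*J-1) := by
    rw [e1]; field_simp
  have e2' : 2*(j:ℝ) * (kraw m (2*(x:ℝ)+1) (1/2) (2*J) - kraw m ((2*(x:ℝ)+1)+1) (1/2) (2*J))
      = 2*((j:ℝ)+(n:ℝ)) * kraw (m-1) (2*(x:ℝ)+1) (1/2) (2*J-1) := by
    rw [e2]; field_simp
  have e3' : (2*(j:ℝ)-1) * (kraw (m-1) (2*(x:ℝ)) (1/2) (2*J-1) + kraw (m-1) (2*(x:ℝ)+1) (1/2) (2*J-1))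
      = 2*((2*(j:ℝ)-1) - ((j:ℝ)+(n:ℝ)-1)) * kraw (m-1) (2*(x:ℝ)) (1/2) (2*J-2) := by
    rw [e3]; field_simp
  linear_combination (-(2*(j:ℝ)-1)/2) * e1' + (-(2*(j:ℝ)-1)/2) * e2'
    + (-((j:ℝ)+(n:ℝ))) * e3'
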